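/- There exist positive constants Ĉ₀ and C₀ (depending only on ε and c) such that Ĉ₀·ψ₂(r) ≤ ψ₁(r) ≤ C₀·ψ₂(r) for all r > 0. -/

import Mathlib

open MeasureTheory Real

/-- `ψ₁ c ε r = ∫₀^r e^{c s²/2} (∫_s^∞ e^{-(c-ε) u²/2} du) ds`. -/
noncomputable def psi1 (c ε r : ℝ) : ℝ :=
  ∫ s in (0:ℝ)..r, Real.exp (c * s ^ 2 / 2) * ∫ u in Set.Ioi s, Real.exp (-(c - ε) * u ^ 2 / 2)

/-- `ψ₂ ε r = (e^{ε r²/2} - 1)/(r(1+r))`. -/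
noncomputable def psi2 (ε r : ℝ) : ℝ :=
  (Real.exp (ε * r ^ 2 / 2) - 1) / (r * (1 + r))

open Set


lemma int_g {a : ℝ} (ha : 0 < a) : Integrable (fun u : ℝ => Real.exp (-a * u ^ 2 / 2)) := by
  have h := integrable_exp_neg_mul_sq (show (0:ℝ) < a / 2 by linarith)
  convert h using 2 with u
  ring_nf

lemma tail_lower {a : ℝ} (ha : 0 < a) {s : ℝ} (hs : 0 ≤ s) :
    Real.exp (-(3 * a) / 2) * (Real.exp (-a * s ^ 2 / 2) / (1 + s)) ≤
      ∫ u in Ioi s, Real.exp (-a * u ^ 2 / 2) := by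
  set δ : ℝ := 1 / (1 + s) with hδ
  have h1s : (0:ℝ) < 1 + s := by linarith
  have hδ0 : 0 < δ := by positivity
  have hδ1 : δ ≤ 1 := by rw [hδ, div_le_one h1s]; linarith
  have hδs : δ * (1 + s) = 1 := one_div_mul_cancel h1s.ne'
  have step1 : (∫ u in Ioc s (s + δ), Real.exp (-a * u ^ 2 / 2)) ≤
      ∫ u in Ioi s, Real.exp (-a * u ^ 2 / 2) := by
    apply setIntegral_mono_set ((int_g ha).integrableOn)
      (Filter.Eventually.of_forall fun u => (Real.exp_pos _).le)
    exact HasSubset.Subset.eventuallyLE Ioc_subset_Ioi_self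
  have step2 : (∫ _u in Ioc s (s + δ), Real.exp (-a * (s + δ) ^ 2 / 2)) ≤
      ∫ u in Ioc s (s + δ), Real.exp (-a * u ^ 2 / 2) := by
    apply setIntegral_mono_on (integrableOn_const measure_Ioc_lt_top.ne)
      ((int_g ha).integrableOn) measurableSet_Ioc
    intro u hu
    apply Real.exp_le_exp.2
    have h1 : s < u := hu.1
    have h2 : u ≤ s + δ := hu.2
    have hu2 : u ^ 2 ≤ (s + δ) ^ 2 := by nlinarith
    nlinarith
  have step3 : (∫ _u in Ioc s (s + δ), Real.exp (-a * (s + δ) ^ 2 / 2)) =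
      δ * Real.exp (-a * (s + δ) ^ 2 / 2) := by
    rw [setIntegral_const, Measure.real_def, Real.volume_Ioc, smul_eq_mul]
    congr 1
    rw [ENNReal.toReal_ofReal (by linarith)]
    ring
  refine le_trans ?_ (le_trans (step3 ▸ step2) step1)
  have key : Real.exp (-(3 * a) / 2) * Real.exp (-a * s ^ 2 / 2) ≤
      Real.exp (-a * (s + δ) ^ 2 / 2) := by
    rw [← Real.exp_add]
    apply Real.exp_le_exp.2
    have h2 : 2 * s * δ ≤ 2 := by nlinarith
    have h3 : δ ^ 2 ≤ 1 := by nlinarith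
    nlinarith
  calc Real.exp (-(3 * a) / 2) * (Real.exp (-a * s ^ 2 / 2) / (1 + s))
      = δ * (Real.exp (-(3 * a) / 2) * Real.exp (-a * s ^ 2 / 2)) := by
        rw [hδ]; ring
    _ ≤ δ * Real.exp (-a * (s + δ) ^ 2 / 2) := by
        exact mul_le_mul_of_nonneg_left key hδ0.le

lemma int_gm {a : ℝ} (ha : 0 < a) :
    Integrable (fun u : ℝ => u * Real.exp (-a * u ^ 2 / 2)) := by
  have h := integrable_mul_exp_neg_mul_sq (show (0:ℝ) < a / 2 by linarith)
  convert h using 2 with u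
  ring_nf

lemma tail_mul_eq {a : ℝ} (ha : 0 < a) (s : ℝ) :
    (∫ u in Ioi s, u * Real.exp (-a * u ^ 2 / 2)) = Real.exp (-a * s ^ 2 / 2) / a := by
  have hderiv : ∀ x ∈ Ici s, HasDerivAt (fun u : ℝ => -Real.exp (-a * u ^ 2 / 2) / a)
      (x * Real.exp (-a * x ^ 2 / 2)) x := by
    intro x _
    have h1 : HasDerivAt (fun u : ℝ => -a * u ^ 2 / 2) (-a * x) x := by
      have := (hasDerivAt_pow 2 x).const_mul (-a) |>.div_const 2
      refine this.congr_deriv ?_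
      ring
    have h2 := (h1.exp.neg).div_const a
    refine h2.congr_deriv ?_
    field_simp
  have htend : Filter.Tendsto (fun u : ℝ => -Real.exp (-a * u ^ 2 / 2) / a)
      Filter.atTop (nhds 0) := by
    have h1 : Filter.Tendsto (fun u : ℝ => (a / 2) * u ^ 2) Filter.atTop Filter.atTop := by
      exact (Filter.tendsto_pow_atTop (by norm_num)).const_mul_atTop (by linarith)
    have h2 : Filter.Tendsto (fun u : ℝ => Real.exp (-a * u ^ 2 / 2))
        Filter.atTop (nhds 0) := by
      have := (tendsto_exp_neg_atTop_nhds_zero).comp h1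
      convert this using 2 with u
      simp only [Function.comp_apply]
      ring_nf
    have := (h2.neg).div_const a
    simpa using this
  have := integral_Ioi_of_hasDerivAt_of_tendsto' hderiv ((int_gm ha).integrableOn) htend
  rw [this]
  field_simp
  ring

lemma tail_upper {a : ℝ} (ha : 0 < a) {s : ℝ} (hs : 0 ≤ s) :
    (∫ u in Ioi s, Real.exp (-a * u ^ 2 / 2)) ≤
      (max (2 * Real.exp (a / 2) * ∫ u in Ioi (0:ℝ), Real.exp (-a * u ^ 2 / 2)) (2 / a)) *
        (Real.exp (-a * s ^ 2 / 2) / (1 + s)) := by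
  have h1s : (0:ℝ) < 1 + s := by linarith
  have hXpos : 0 < Real.exp (-a * s ^ 2 / 2) / (1 + s) := by positivity
  rcases le_or_gt s 1 with hcase | hcase
  · -- s ≤ 1
    set S : ℝ := ∫ u in Ioi (0:ℝ), Real.exp (-a * u ^ 2 / 2) with hS
    have hS0 : 0 ≤ S := setIntegral_nonneg measurableSet_Ioi
      (fun u _ => (Real.exp_pos _).le)
    have hsub : (∫ u in Ioi s, Real.exp (-a * u ^ 2 / 2)) ≤ S := by
      apply setIntegral_mono_set ((int_g ha).integrableOn)
        (Filter.Eventually.of_forall fun u => (Real.exp_pos _).le)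
      exact HasSubset.Subset.eventuallyLE (Ioi_subset_Ioi hs)
    have hE : Real.exp (-a / 2) ≤ Real.exp (-a * s ^ 2 / 2) := by
      apply Real.exp_le_exp.2
      have h2 : s ^ 2 ≤ 1 := by nlinarith
      nlinarith
    have hX : Real.exp (-a / 2) / 2 ≤ Real.exp (-a * s ^ 2 / 2) / (1 + s) :=
      div_le_div₀ (Real.exp_pos _).le hE h1s (by linarith)
    have key : S ≤ 2 * Real.exp (a / 2) * S * (Real.exp (-a * s ^ 2 / 2) / (1 + s)) := by
      have h2 : 2 * Real.exp (a / 2) * S * (Real.exp (-a / 2) / 2) ≤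
          2 * Real.exp (a / 2) * S * (Real.exp (-a * s ^ 2 / 2) / (1 + s)) :=
        mul_le_mul_of_nonneg_left hX (by positivity)
      have h3 : 2 * Real.exp (a / 2) * S * (Real.exp (-a / 2) / 2) = S := by
        rw [show (2:ℝ) * Real.exp (a/2) * S * (Real.exp (-a/2)/2)
            = S * (Real.exp (a/2) * Real.exp (-a/2)) by ring, ← Real.exp_add,
          show a/2 + -a/2 = 0 by ring, Real.exp_zero, mul_one]
      linarith
    calc (∫ u in Ioi s, Real.exp (-a * u ^ 2 / 2)) ≤ S := hsub
      _ ≤ 2 * Real.exp (a / 2) * S * (Real.exp (-a * s ^ 2 / 2) / (1 + s)) := key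
      _ ≤ _ := mul_le_mul_of_nonneg_right (le_max_left _ _) hXpos.le
  · -- 1 < s
    have hs0 : 0 < s := by linarith
    have step : s * (∫ u in Ioi s, Real.exp (-a * u ^ 2 / 2)) ≤
        Real.exp (-a * s ^ 2 / 2) / a := by
      rw [← integral_const_mul, ← tail_mul_eq ha s]
      apply setIntegral_mono_on (((int_g ha).integrableOn).const_mul s)
        ((int_gm ha).integrableOn) measurableSet_Ioi
      intro u hu
      have : s ≤ u := le_of_lt hu
      nlinarith [Real.exp_pos (-a * u ^ 2 / 2)]
    have step2 : (∫ u in Ioi s, Real.exp (-a * u ^ 2 / 2)) ≤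
        Real.exp (-a * s ^ 2 / 2) / (a * s) := by
      rw [le_div_iff₀ (by positivity)]
      calc (∫ u in Ioi s, Real.exp (-a * u ^ 2 / 2)) * (a * s)
          = (s * ∫ u in Ioi s, Real.exp (-a * u ^ 2 / 2)) * a := by ring
        _ ≤ (Real.exp (-a * s ^ 2 / 2) / a) * a := by
            exact mul_le_mul_of_nonneg_right step ha.le
        _ = Real.exp (-a * s ^ 2 / 2) := by field_simp
    have step3 : Real.exp (-a * s ^ 2 / 2) / (a * s) ≤
        (2 / a) * (Real.exp (-a * s ^ 2 / 2) / (1 + s)) := by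
      have hEpos := Real.exp_pos (-a * s ^ 2 / 2)
      rw [div_mul_div_comm, div_le_div_iff₀ (by positivity) (by positivity)]
      nlinarith [mul_pos hEpos ha, mul_pos (mul_pos hEpos ha) hs0]
    calc (∫ u in Ioi s, Real.exp (-a * u ^ 2 / 2)) ≤
        Real.exp (-a * s ^ 2 / 2) / (a * s) := step2
      _ ≤ (2 / a) * (Real.exp (-a * s ^ 2 / 2) / (1 + s)) := step3
      _ ≤ _ := mul_le_mul_of_nonneg_right (le_max_right _ _) hXpos.le

lemma tail_eq {a : ℝ} (ha : 0 < a) {s : ℝ} (hs : 0 ≤ s) :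
    (∫ u in Ioi s, Real.exp (-a * u ^ 2 / 2)) =
      (∫ u in Ioi (0:ℝ), Real.exp (-a * u ^ 2 / 2)) -
        ∫ u in (0:ℝ)..s, Real.exp (-a * u ^ 2 / 2) := by
  have hI := (int_g ha).integrableOn (s := Ioc 0 s)
  have hI2 := (int_g ha).integrableOn (s := Ioi s)
  rw [intervalIntegral.integral_of_le hs, eq_sub_iff_add_eq, add_comm,
    ← setIntegral_union (Ioc_disjoint_Ioi le_rfl) measurableSet_Ioi hI hI2,
    Ioc_union_Ioi_eq_Ioi hs]


lemma h_intble (ε : ℝ) {l u : ℝ} (hl : 0 ≤ l) (hu : 0 ≤ u) :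
    IntervalIntegrable (fun s : ℝ => Real.exp (ε * s ^ 2 / 2) / (1 + s)) volume l u := by
  apply ContinuousOn.intervalIntegrable
  apply ContinuousOn.div
  · exact (Real.continuous_exp.comp (by continuity)).continuousOn
  · exact continuousOn_const.add continuousOn_id
  · intro x hx
    have h0 : (0:ℝ) ≤ l ⊓ u := le_min hl hu
    have := hx.1
    intro hc
    nlinarith

lemma psi1_bounds {c ε : ℝ} (hε : 0 < ε) (hεc : ε < c) {r : ℝ} (hr : 0 < r) :
    Real.exp (-(3 * (c - ε)) / 2) *
        (∫ s in (0:ℝ)..r, Real.exp (ε * s ^ 2 / 2) / (1 + s)) ≤ psi1 c ε r ∧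
      psi1 c ε r ≤
        (max (2 * Real.exp ((c - ε) / 2) *
            ∫ u in Ioi (0:ℝ), Real.exp (-(c - ε) * u ^ 2 / 2)) (2 / (c - ε))) *
          ∫ s in (0:ℝ)..r, Real.exp (ε * s ^ 2 / 2) / (1 + s) := by
  have ha : 0 < c - ε := by linarith
  set K : ℝ := max (2 * Real.exp ((c - ε) / 2) *
    ∫ u in Ioi (0:ℝ), Real.exp (-(c - ε) * u ^ 2 / 2)) (2 / (c - ε)) with hK
  set S0 : ℝ := ∫ u in Ioi (0:ℝ), Real.exp (-(c - ε) * u ^ 2 / 2) with hS0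
  set P : ℝ → ℝ := fun s => ∫ u in (0:ℝ)..s, Real.exp (-(c - ε) * u ^ 2 / 2) with hP
  have hPcont : Continuous P :=
    intervalIntegral.continuous_primitive (fun a b => (int_g ha).intervalIntegrable) 0
  have hftcont : Continuous (fun s : ℝ => Real.exp (c * s ^ 2 / 2) * (S0 - P s)) :=
    (Real.continuous_exp.comp (by continuity)).mul (continuous_const.sub hPcont)
  have heq : psi1 c ε r = ∫ s in (0:ℝ)..r, Real.exp (c * s ^ 2 / 2) * (S0 - P s) := by
    unfold psi1
    apply intervalIntegral.integral_congr
    intro s hs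
    rw [uIcc_of_le hr.le] at hs
    simp only
    rw [tail_eq ha hs.1]
  have hIeq : ∀ s : ℝ, 0 ≤ s → Real.exp (c * s ^ 2 / 2) * (S0 - P s) =
      Real.exp (c * s ^ 2 / 2) * ∫ u in Ioi s, Real.exp (-(c - ε) * u ^ 2 / 2) := by
    intro s hs
    rw [tail_eq ha hs]
  have hexpsplit : ∀ s : ℝ, Real.exp (c * s ^ 2 / 2) * Real.exp (-(c - ε) * s ^ 2 / 2) =
      Real.exp (ε * s ^ 2 / 2) := by
    intro s
    rw [← Real.exp_add]
    congr 1
    ring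
  constructor
  · rw [heq, ← intervalIntegral.integral_const_mul]
    apply intervalIntegral.integral_mono_on hr.le
      (((h_intble ε le_rfl hr.le).const_mul _)) (hftcont.intervalIntegrable 0 r)
    intro s hs
    rw [hIeq s hs.1]
    have h1 := tail_lower ha hs.1
    have h2 := mul_le_mul_of_nonneg_left h1 (Real.exp_pos (c * s ^ 2 / 2)).le
    calc Real.exp (-(3 * (c - ε)) / 2) * (Real.exp (ε * s ^ 2 / 2) / (1 + s))
        = Real.exp (c * s ^ 2 / 2) *
          (Real.exp (-(3 * (c - ε)) / 2) * (Real.exp (-(c - ε) * s ^ 2 / 2) / (1 + s))) := by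
          rw [← hexpsplit s]; ring
      _ ≤ _ := h2
  · rw [heq, ← intervalIntegral.integral_const_mul]
    apply intervalIntegral.integral_mono_on hr.le (hftcont.intervalIntegrable 0 r)
      ((h_intble ε le_rfl hr.le).const_mul _)
    intro s hs
    rw [hIeq s hs.1]
    have h1 := tail_upper ha hs.1
    have h2 := mul_le_mul_of_nonneg_left h1 (Real.exp_pos (c * s ^ 2 / 2)).le
    calc Real.exp (c * s ^ 2 / 2) * ∫ u in Ioi s, Real.exp (-(c - ε) * u ^ 2 / 2)
        ≤ Real.exp (c * s ^ 2 / 2) * (K * (Real.exp (-(c - ε) * s ^ 2 / 2) / (1 + s))) := h2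
      _ = K * (Real.exp (ε * s ^ 2 / 2) / (1 + s)) := by rw [← hexpsplit s]; ring


lemma ftc_exp_lin {k : ℝ} (hk : 0 < k) (l u : ℝ) :
    ∫ s in l..u, Real.exp (k * s) = (Real.exp (k * u) - Real.exp (k * l)) / k := by
  have hder : ∀ x ∈ uIcc l u, HasDerivAt (fun s : ℝ => Real.exp (k * s) / k)
      (Real.exp (k * x)) x := by
    intro x _
    have h1 : HasDerivAt (fun s : ℝ => k * s) k x := by
      simpa using (hasDerivAt_id x).const_mul k
    have h2 := (h1.exp).div_const k
    refine h2.congr_deriv ?_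
    field_simp
  rw [intervalIntegral.integral_eq_sub_of_hasDerivAt hder
    ((Real.continuous_exp.comp (continuous_const.mul continuous_id)).intervalIntegrable l u)]
  ring

lemma ftc_exp_sq (ε l u : ℝ) :
    ∫ s in l..u, Real.exp (ε * s ^ 2 / 2) * (ε * s) =
      Real.exp (ε * u ^ 2 / 2) - Real.exp (ε * l ^ 2 / 2) := by
  have hder : ∀ x ∈ uIcc l u, HasDerivAt (fun s : ℝ => Real.exp (ε * s ^ 2 / 2))
      (Real.exp (ε * x ^ 2 / 2) * (ε * x)) x := by
    intro x _
    have h1 : HasDerivAt (fun s : ℝ => ε * s ^ 2 / 2) (ε * x) x := by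
      have := ((hasDerivAt_pow 2 x).const_mul ε).div_const 2
      refine this.congr_deriv ?_
      ring
    exact h1.exp
  rw [intervalIntegral.integral_eq_sub_of_hasDerivAt hder]
  exact ((Real.continuous_exp.comp (by continuity)).mul (by continuity)).intervalIntegrable l u


lemma psi2_pos {ε r : ℝ} (hε : 0 < ε) (hr : 0 < r) : 0 < psi2 ε r := by
  have h := Real.add_one_le_exp (ε * r ^ 2 / 2)
  have hx : 0 < ε * r ^ 2 / 2 := by positivity
  have : 0 < Real.exp (ε * r ^ 2 / 2) - 1 := by linarith
  exact div_pos this (by positivity)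

lemma J_lower {ε : ℝ} (hε : 0 < ε) {r : ℝ} (hr : 0 < r) :
    min (1 / (ε * Real.exp (ε / 2))) ((1 - Real.exp (-(3 * ε) / 8)) / ε) * psi2 ε r ≤
      ∫ s in (0:ℝ)..r, Real.exp (ε * s ^ 2 / 2) / (1 + s) := by
  have hq1 : Real.exp (-(3 * ε) / 8) < 1 := by
    rw [← Real.exp_zero]; apply Real.exp_lt_exp.2; linarith
  have hcmin2 : 0 < (1 - Real.exp (-(3 * ε) / 8)) / ε := by
    apply div_pos (by linarith) hε
  have hpsi2 := psi2_pos hε hr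
  set E : ℝ := Real.exp (ε * r ^ 2 / 2) with hE
  have hE1 : 1 + ε * r ^ 2 / 2 ≤ E := by
    rw [hE]; linarith [Real.add_one_le_exp (ε * r ^ 2 / 2)]
  rcases le_or_gt r 1 with hr1 | hr1
  · -- small r : J ≥ r/2 and psi2 ≤ ε exp(ε/2) r / 2
    have step1 : r / 2 ≤ ∫ s in (0:ℝ)..r, Real.exp (ε * s ^ 2 / 2) / (1 + s) := by
      have h := intervalIntegral.integral_mono_on hr.le
        (intervalIntegrable_const (c := (1:ℝ)/2)) (h_intble ε le_rfl hr.le) ?_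
      · simp at h; linarith
      · intro s hs
        have hs0 := hs.1
        have hs1 : s ≤ 1 := hs.2.trans hr1
        rw [le_div_iff₀ (by linarith)]
        have := Real.add_one_le_exp (ε * s ^ 2 / 2)
        nlinarith
    have hpsi2ub : psi2 ε r ≤ ε * Real.exp (ε / 2) * r / 2 := by
      have hx := Real.add_one_le_exp (-(ε * r ^ 2 / 2))
      have hmul := mul_le_mul_of_nonneg_right hx (Real.exp_pos (ε * r ^ 2 / 2)).le
      rw [← Real.exp_add, neg_add_cancel, Real.exp_zero] at hmul
      -- hmul : (-(ε r²/2)+1) * E ≤ 1  so E - 1 ≤ (εr²/2) E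
      have hEub : E ≤ Real.exp (ε / 2) := by
        apply Real.exp_le_exp.2
        have h2 : r ^ 2 ≤ 1 := by nlinarith
        nlinarith
      have hxEl : E - 1 ≤ ε * r ^ 2 / 2 * E := by nlinarith
      have h1 : E - 1 ≤ ε * r ^ 2 / 2 * Real.exp (ε / 2) :=
        hxEl.trans (mul_le_mul_of_nonneg_left hEub (by positivity))
      rw [psi2, div_le_iff₀ (by positivity)]
      nlinarith [h1, mul_nonneg (mul_nonneg (mul_nonneg hε.le (sq_nonneg r))
        (Real.exp_pos (ε/2)).le) hr.le]
    calc min (1 / (ε * Real.exp (ε / 2))) ((1 - Real.exp (-(3 * ε) / 8)) / ε) * psi2 ε r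
        ≤ 1 / (ε * Real.exp (ε / 2)) * psi2 ε r :=
          mul_le_mul_of_nonneg_right (min_le_left _ _) hpsi2.le
      _ ≤ 1 / (ε * Real.exp (ε / 2)) * (ε * Real.exp (ε / 2) * r / 2) :=
          mul_le_mul_of_nonneg_left hpsi2ub (by positivity)
      _ = r / 2 := by field_simp
      _ ≤ _ := step1
  · -- large r
    have hr2 : 0 ≤ r / 2 := by linarith
    have hsplit : (∫ s in (0:ℝ)..r, Real.exp (ε * s ^ 2 / 2) / (1 + s)) =
        (∫ s in (0:ℝ)..(r/2), Real.exp (ε * s ^ 2 / 2) / (1 + s)) +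
          ∫ s in (r/2)..r, Real.exp (ε * s ^ 2 / 2) / (1 + s) :=
      (intervalIntegral.integral_add_adjacent_intervals (h_intble ε le_rfl hr2)
        (h_intble ε hr2 hr.le)).symm
    have hhead : 0 ≤ ∫ s in (0:ℝ)..(r/2), Real.exp (ε * s ^ 2 / 2) / (1 + s) := by
      apply intervalIntegral.integral_nonneg hr2
      intro s hs
      have := hs.1
      positivity
    have htail : (1 / (ε * r)) * (1 / (1 + r)) *
        (E - Real.exp (ε * (r/2) ^ 2 / 2)) ≤
        ∫ s in (r/2)..r, Real.exp (ε * s ^ 2 / 2) / (1 + s) := by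
      have hcont : Continuous (fun s : ℝ => (1 / (ε * r)) * (1 / (1 + r)) *
          (Real.exp (ε * s ^ 2 / 2) * (ε * s))) := by fun_prop
      have hmono := intervalIntegral.integral_mono_on (by linarith : r/2 ≤ r)
        (hcont.intervalIntegrable _ _) (h_intble ε hr2 hr.le) ?_
      · have hca : (∫ s in (r/2)..r, (1 / (ε * r)) * (1 / (1 + r)) *
            (Real.exp (ε * s ^ 2 / 2) * (ε * s))) =
            (1 / (ε * r)) * (1 / (1 + r)) * (E - Real.exp (ε * (r/2) ^ 2 / 2)) := by
          rw [intervalIntegral.integral_const_mul, ftc_exp_sq]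
        rw [← hca]
        exact hmono
      · intro s hs
        have hs1 : r / 2 ≤ s := hs.1
        have hs2 : s ≤ r := hs.2
        have hsp : 0 < s := by linarith
        have hexp := (Real.exp_pos (ε * s ^ 2 / 2)).le
        rw [div_eq_mul_inv (Real.exp (ε * s ^ 2 / 2)) (1 + s)]
        have key : (1 / (ε * r)) * (1 / (1 + r)) * (ε * s) ≤ (1 + s)⁻¹ := by
          rw [show (1 / (ε * r)) * (1 / (1 + r)) * (ε * s) = (s / r) / (1 + r) by
            field_simp]
          rw [← one_div, div_le_div_iff₀ (by linarith) (by linarith)]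
          have : s / r ≤ 1 := by rw [div_le_one hr]; exact hs2
          nlinarith [div_nonneg hsp.le hr.le]
        calc (1 / (ε * r)) * (1 / (1 + r)) * (Real.exp (ε * s ^ 2 / 2) * (ε * s))
            = Real.exp (ε * s ^ 2 / 2) * ((1 / (ε * r)) * (1 / (1 + r)) * (ε * s)) := by ring
          _ ≤ Real.exp (ε * s ^ 2 / 2) * (1 + s)⁻¹ :=
              mul_le_mul_of_nonneg_left key hexp
    -- E - exp(εr²/8) ≥ (1 - exp(-3ε/8)) (E - 1)
    have hw : Real.exp (ε * (r/2) ^ 2 / 2) = E * Real.exp (-(3 * ε * r ^ 2) / 8) := by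
      rw [hE, ← Real.exp_add]; congr 1; ring
    have hw1 : Real.exp (-(3 * ε * r ^ 2) / 8) ≤ Real.exp (-(3 * ε) / 8) := by
      apply Real.exp_le_exp.2
      have h2 : 1 ≤ r ^ 2 := by nlinarith
      nlinarith
    have hkey : (1 - Real.exp (-(3 * ε) / 8)) * (E - 1) ≤
        E - Real.exp (ε * (r/2) ^ 2 / 2) := by
      rw [hw]
      have hEpos : (0:ℝ) < E := Real.exp_pos _
      have h2 : E * Real.exp (-(3 * ε * r ^ 2) / 8) ≤ E * Real.exp (-(3 * ε) / 8) :=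
        mul_le_mul_of_nonneg_left hw1 hEpos.le
      nlinarith [h2]
    have hfinal : ((1 - Real.exp (-(3 * ε) / 8)) / ε) * psi2 ε r ≤
        (1 / (ε * r)) * (1 / (1 + r)) * (E - Real.exp (ε * (r/2) ^ 2 / 2)) := by
      have h1 : ((1 - Real.exp (-(3 * ε) / 8)) / ε) * psi2 ε r =
          (1 / (ε * r)) * (1 / (1 + r)) * ((1 - Real.exp (-(3 * ε) / 8)) * (E - 1)) := by
        have hrne : r ≠ 0 := hr.ne'
        have h1rne : (1 + r) ≠ 0 := by positivity
        have hεne : ε ≠ 0 := hε.ne'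
        rw [psi2, hE]
        field_simp
      rw [h1]
      exact mul_le_mul_of_nonneg_left hkey (by positivity)
    calc min (1 / (ε * Real.exp (ε / 2))) ((1 - Real.exp (-(3 * ε) / 8)) / ε) * psi2 ε r
        ≤ ((1 - Real.exp (-(3 * ε) / 8)) / ε) * psi2 ε r :=
          mul_le_mul_of_nonneg_right (min_le_right _ _) hpsi2.le
      _ ≤ (1 / (ε * r)) * (1 / (1 + r)) * (E - Real.exp (ε * (r/2) ^ 2 / 2)) := hfinal
      _ ≤ ∫ s in (r/2)..r, Real.exp (ε * s ^ 2 / 2) / (1 + s) := htail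
      _ ≤ _ := by rw [hsplit]; linarith


lemma aux_pow {ε : ℝ} (hε : 0 < ε) (r : ℝ) :
    (16 / (3 * ε)) ^ 2 * (3 * ε / 16 * r ^ 2) ^ 2 = r ^ 4 := by
  rw [← mul_pow, show 16 / (3 * ε) * (3 * ε / 16 * r ^ 2) = r ^ 2 by
    field_simp]
  ring

set_option maxHeartbeats 1000000 in
lemma J_upper {ε : ℝ} (hε : 0 < ε) {r : ℝ} (hr : 0 < r) :
    (∫ s in (0:ℝ)..r, Real.exp (ε * s ^ 2 / 2) / (1 + s)) ≤
      max (4 * Real.exp (ε / 2) / ε)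
        (4 / (ε * (1 - Real.exp (-ε / 2))) + (16 / (3 * ε)) ^ 2 / (1 - Real.exp (-ε / 2))) *
        psi2 ε r := by
  have hpsi2 := psi2_pos hε hr
  have hq1 : Real.exp (-ε / 2) < 1 := by
    rw [← Real.exp_zero]; apply Real.exp_lt_exp.2; linarith
  have h1q : 0 < 1 - Real.exp (-ε / 2) := by linarith
  set E : ℝ := Real.exp (ε * r ^ 2 / 2) with hE
  have hEpos : 0 < E := Real.exp_pos _
  have hE1 : 1 + ε * r ^ 2 / 2 ≤ E := by
    rw [hE]; linarith [Real.add_one_le_exp (ε * r ^ 2 / 2)]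
  rcases le_or_gt r 1 with hr1 | hr1
  · -- small r
    have step1 : (∫ s in (0:ℝ)..r, Real.exp (ε * s ^ 2 / 2) / (1 + s)) ≤
        r * Real.exp (ε / 2) := by
      have h := intervalIntegral.integral_mono_on hr.le (h_intble ε le_rfl hr.le)
        (intervalIntegrable_const (c := Real.exp (ε / 2))) ?_
      · simpa using h
      · intro s hs
        have hs0 := hs.1
        have hs1 : s ≤ 1 := hs.2.trans hr1
        have h2 : Real.exp (ε * s ^ 2 / 2) / (1 + s) ≤ Real.exp (ε * s ^ 2 / 2) :=
          div_le_self (Real.exp_pos _).le (by linarith)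
        refine h2.trans (Real.exp_le_exp.2 ?_)
        have h3 : s ^ 2 ≤ 1 := by nlinarith
        nlinarith
    have step2 : ε * r / 4 ≤ psi2 ε r := by
      rw [psi2, le_div_iff₀ (by positivity)]
      nlinarith [mul_nonneg (mul_nonneg hε.le (mul_pos hr hr).le)
        (show (0:ℝ) ≤ 1 - r by linarith)]
    calc (∫ s in (0:ℝ)..r, Real.exp (ε * s ^ 2 / 2) / (1 + s)) ≤ r * Real.exp (ε / 2) := step1
      _ = (4 * Real.exp (ε / 2) / ε) * (ε * r / 4) := by field_simp
      _ ≤ (4 * Real.exp (ε / 2) / ε) * psi2 ε r :=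
          mul_le_mul_of_nonneg_left step2 (by positivity)
      _ ≤ _ := mul_le_mul_of_nonneg_right (le_max_left _ _) hpsi2.le
  · -- large r
    have hr2 : 0 ≤ r / 2 := by linarith
    have hEq : 1 ≤ E * Real.exp (-ε / 2) := by
      rw [hE, ← Real.exp_add]
      have h2 : 1 ≤ r ^ 2 := by nlinarith
      have h3 : 0 ≤ ε * r ^ 2 / 2 + -ε / 2 := by nlinarith
      linarith [Real.add_one_le_exp (ε * r ^ 2 / 2 + -ε / 2)]
    have hE1q : (1 - Real.exp (-ε / 2)) * E ≤ E - 1 := by nlinarith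
    have hsplit : (∫ s in (0:ℝ)..r, Real.exp (ε * s ^ 2 / 2) / (1 + s)) =
        (∫ s in (0:ℝ)..(r/2), Real.exp (ε * s ^ 2 / 2) / (1 + s)) +
          ∫ s in (r/2)..r, Real.exp (ε * s ^ 2 / 2) / (1 + s) :=
      (intervalIntegral.integral_add_adjacent_intervals (h_intble ε le_rfl hr2)
        (h_intble ε hr2 hr.le)).symm
    -- head bound
    have hhead : (∫ s in (0:ℝ)..(r/2), Real.exp (ε * s ^ 2 / 2) / (1 + s)) ≤
        (r / 2) * Real.exp (ε * r ^ 2 / 8) := by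
      have h := intervalIntegral.integral_mono_on hr2 (h_intble ε le_rfl hr2)
        (intervalIntegrable_const (c := Real.exp (ε * r ^ 2 / 8))) ?_
      · simpa using h
      · intro s hs
        have hs0 := hs.1
        have hs1 : s ≤ r / 2 := hs.2
        have h2 : Real.exp (ε * s ^ 2 / 2) / (1 + s) ≤ Real.exp (ε * s ^ 2 / 2) :=
          div_le_self (Real.exp_pos _).le (by linarith)
        refine h2.trans (Real.exp_le_exp.2 ?_)
        have h3 : s ^ 2 ≤ (r / 2) ^ 2 := by nlinarith
        nlinarith
    -- tail bound
    have htail : (∫ s in (r/2)..r, Real.exp (ε * s ^ 2 / 2) / (1 + s)) ≤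
        4 * E / (ε * r * (1 + r)) := by
      have hcont : Continuous (fun s : ℝ => 2 / (1 + r) * Real.exp (ε * r / 2 * s)) := by
        fun_prop
      have hmono := intervalIntegral.integral_mono_on (by linarith : r/2 ≤ r)
        (h_intble ε hr2 hr.le) (hcont.intervalIntegrable _ _) ?_
      · have hval : (∫ s in (r/2)..r, 2 / (1 + r) * Real.exp (ε * r / 2 * s)) =
            2 / (1 + r) * ((E - Real.exp (ε * r / 2 * (r / 2))) / (ε * r / 2)) := by
          rw [intervalIntegral.integral_const_mul, ftc_exp_lin (by positivity)]
          congr 2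
          rw [hE]
          congr 1
          ring
        rw [hval] at hmono
        refine hmono.trans ?_
        have hM4 : 0 < Real.exp (ε * r / 2 * (r / 2)) := Real.exp_pos _
        have h2 : (E - Real.exp (ε * r / 2 * (r / 2))) / (ε * r / 2) ≤ E / (ε * r / 2) := by
          gcongr
          linarith [hM4]
        calc 2 / (1 + r) * ((E - Real.exp (ε * r / 2 * (r / 2))) / (ε * r / 2))
            ≤ 2 / (1 + r) * (E / (ε * r / 2)) :=
              mul_le_mul_of_nonneg_left h2 (by positivity)
          _ = 4 * E / (ε * r * (1 + r)) := by
              field_simp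
              ring
      · intro s hs
        have hs1 : r / 2 ≤ s := hs.1
        have hs2 : s ≤ r := hs.2
        have hs0 : 0 ≤ s := by linarith
        have hnum : Real.exp (ε * s ^ 2 / 2) ≤ Real.exp (ε * r / 2 * s) := by
          apply Real.exp_le_exp.2
          have h3 : s ^ 2 ≤ r * s := by nlinarith
          nlinarith
        have hden : (1 + r) / 2 ≤ 1 + s := by linarith
        calc Real.exp (ε * s ^ 2 / 2) / (1 + s)
            ≤ Real.exp (ε * r / 2 * s) / ((1 + r) / 2) :=
              div_le_div₀ (Real.exp_pos _).le hnum (by linarith) hden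
          _ = 2 / (1 + r) * Real.exp (ε * r / 2 * s) := by
              rw [div_div_eq_mul_div]; ring
    -- combine
    have hheadpsi : (r / 2) * Real.exp (ε * r ^ 2 / 8) ≤
        ((16 / (3 * ε)) ^ 2 / (1 - Real.exp (-ε / 2))) * psi2 ε r := by
      have ht0 : (0:ℝ) ≤ 3 * ε / 16 * r ^ 2 := by positivity
      have ht : 3 * ε / 16 * r ^ 2 ≤ Real.exp (3 * ε / 16 * r ^ 2) := by
        linarith [Real.add_one_le_exp (3 * ε / 16 * r ^ 2)]
      have hsq : (3 * ε / 16 * r ^ 2) ^ 2 ≤ Real.exp (3 * ε / 16 * r ^ 2) ^ 2 :=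
        pow_le_pow_left₀ ht0 ht 2
      have hexp2 : Real.exp (3 * ε / 16 * r ^ 2) ^ 2 = Real.exp (3 * ε / 8 * r ^ 2) := by
        rw [sq, ← Real.exp_add]
        congr 1
        ring
      have hBG : r ^ 4 ≤ (16 / (3 * ε)) ^ 2 * Real.exp (3 * ε / 8 * r ^ 2) := by
        have h := mul_le_mul_of_nonneg_left (hsq.trans_eq hexp2)
          (show (0:ℝ) ≤ (16 / (3 * ε)) ^ 2 by positivity)
        have hid := aux_pow hε r
        rw [hid] at h
        exact h
      have hGH : Real.exp (3 * ε / 8 * r ^ 2) * Real.exp (ε * r ^ 2 / 8) = E := by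
        rw [hE, ← Real.exp_add]
        congr 1
        ring
      rw [psi2, ← mul_div_assoc, le_div_iff₀ (by positivity)]
      have hCB : ((16 / (3 * ε)) ^ 2 / (1 - Real.exp (-ε / 2))) * (1 - Real.exp (-ε / 2)) =
          (16 / (3 * ε)) ^ 2 := div_mul_cancel₀ _ h1q.ne'
      have hCpos : (0:ℝ) ≤ (16 / (3 * ε)) ^ 2 / (1 - Real.exp (-ε / 2)) := by positivity
      have hCE : (16 / (3 * ε)) ^ 2 * E ≤
          ((16 / (3 * ε)) ^ 2 / (1 - Real.exp (-ε / 2))) * (E - 1) := by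
        nlinarith [mul_le_mul_of_nonneg_left hE1q hCpos]
      have hpoly : r ^ 2 * (1 + r) / 2 ≤ r ^ 4 := by
        nlinarith [mul_nonneg (mul_pos hr hr).le (show (0:ℝ) ≤ 2 * r ^ 2 - r - 1 by nlinarith)]
      have hstep := mul_le_mul_of_nonneg_right hpoly (Real.exp_pos (ε * r ^ 2 / 8)).le
      have hfin := mul_le_mul_of_nonneg_right hBG (Real.exp_pos (ε * r ^ 2 / 8)).le
      rw [mul_assoc, hGH] at hfin
      nlinarith [hstep, hfin, hCE]
    have htailpsi : 4 * E / (ε * r * (1 + r)) ≤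
        (4 / (ε * (1 - Real.exp (-ε / 2)))) * psi2 ε r := by
      rw [psi2, div_mul_div_comm, div_le_div_iff₀ (by positivity) (by positivity)]
      nlinarith [mul_le_mul_of_nonneg_right hE1q
        (show (0:ℝ) ≤ 4 * ε * r * (1 + r) by positivity)]
    rw [hsplit]
    calc (∫ s in (0:ℝ)..(r/2), Real.exp (ε * s ^ 2 / 2) / (1 + s)) +
          ∫ s in (r/2)..r, Real.exp (ε * s ^ 2 / 2) / (1 + s)
        ≤ ((16 / (3 * ε)) ^ 2 / (1 - Real.exp (-ε / 2))) * psi2 ε r +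
            (4 / (ε * (1 - Real.exp (-ε / 2)))) * psi2 ε r := by
          linarith [hhead.trans hheadpsi, htail.trans htailpsi]
      _ = (4 / (ε * (1 - Real.exp (-ε / 2))) +
            (16 / (3 * ε)) ^ 2 / (1 - Real.exp (-ε / 2))) * psi2 ε r := by ring
      _ ≤ _ := mul_le_mul_of_nonneg_right (le_max_right _ _) hpsi2.le

theorem stmt_0 (c ε : ℝ) (hε : 0 < ε) (hεc : ε < c) :
    ∃ Chat C0 : ℝ, 0 < Chat ∧ 0 < C0 ∧
      ∀ r : ℝ, 0 < r → Chat * psi2 ε r ≤ psi1 c ε r ∧ psi1 c ε r ≤ C0 * psi2 ε r := by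
  have ha : 0 < c - ε := by linarith
  have hq38 : Real.exp (-(3 * ε) / 8) < 1 := by
    rw [← Real.exp_zero]; apply Real.exp_lt_exp.2; linarith
  set K : ℝ := max (2 * Real.exp ((c - ε) / 2) *
    ∫ u in Ioi (0:ℝ), Real.exp (-(c - ε) * u ^ 2 / 2)) (2 / (c - ε)) with hK
  set cmin : ℝ := min (1 / (ε * Real.exp (ε / 2))) ((1 - Real.exp (-(3 * ε) / 8)) / ε)
    with hcmin
  set CJ : ℝ := max (4 * Real.exp (ε / 2) / ε)
    (4 / (ε * (1 - Real.exp (-ε / 2))) + (16 / (3 * ε)) ^ 2 / (1 - Real.exp (-ε / 2)))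
    with hCJ
  have hcminpos : 0 < cmin := by
    apply lt_min (by positivity)
    apply div_pos (by linarith) hε
  have hKpos : 0 < K := lt_of_lt_of_le (by positivity) (le_max_right _ _)
  have hCJpos : 0 < CJ := lt_of_lt_of_le (by positivity) (le_max_left _ _)
  refine ⟨Real.exp (-(3 * (c - ε)) / 2) * cmin, K * CJ, by positivity, by positivity, ?_⟩
  intro r hr
  obtain ⟨hlow, hup⟩ := psi1_bounds hε hεc hr
  have hJl := J_lower hε hr
  have hJu := J_upper hε hr
  constructor
  · calc Real.exp (-(3 * (c - ε)) / 2) * cmin * psi2 ε r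
        = Real.exp (-(3 * (c - ε)) / 2) * (cmin * psi2 ε r) := by ring
      _ ≤ Real.exp (-(3 * (c - ε)) / 2) *
          ∫ s in (0:ℝ)..r, Real.exp (ε * s ^ 2 / 2) / (1 + s) :=
          mul_le_mul_of_nonneg_left hJl (Real.exp_pos _).le
      _ ≤ psi1 c ε r := hlow
  · calc psi1 c ε r
        ≤ K * ∫ s in (0:ℝ)..r, Real.exp (ε * s ^ 2 / 2) / (1 + s) := hup
      _ ≤ K * (CJ * psi2 ε r) := mul_le_mul_of_nonneg_left hJu hKpos.le
      _ = K * CJ * psi2 ε r := by ring
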